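/- Let m, n ≥ 1 be integers, and suppose P, C ∈ ℤ[q] satisfy P · ([F_m]!_q · [F_n]!_q) = [F_{m+n}]!_q (so P is the q-Fibonomial coefficient binom_F(m+n, n)_q) and C · [F_{m+n}]_q = P (so C is the q-FiboCatalan number Cat_F(m,n)_q). If P is symmetric and unimodal, then every coefficient of C is nonnegative. -/

import Mathlib

open Polynomial

/-- The q-analog `[n]_q = 1 + q + ⋯ + q^(n-1)` as a polynomial in `ℤ[q]`. -/
noncomputable def qAnalog (n : ℕ) : Polynomial ℤ :=
  ∑ i ∈ Finset.range n, X ^ i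

/-- The q-analog `[n]_{q^r} = 1 + q^r + ⋯ + q^(r(n-1))` as a polynomial in `ℤ[q]`. -/
noncomputable def qAnalogPow (n r : ℕ) : Polynomial ℤ :=
  ∑ i ∈ Finset.range n, X ^ (r * i)

/-- A polynomial of degree `d` is symmetric if `c_k = c_{d-k}` for all `0 ≤ k ≤ d`. -/
def IsSymmPoly (P : Polynomial ℤ) : Prop :=
  ∀ k ≤ P.natDegree, P.coeff k = P.coeff (P.natDegree - k)

/-- A polynomial is unimodal if its coefficient sequence increases up to some
index `M` and decreases afterwards. -/
def IsUnimodalPoly (P : Polynomial ℤ) : Prop :=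
  ∃ M : ℕ, (∀ k, k < M → P.coeff k ≤ P.coeff (k + 1)) ∧
    (∀ k, M ≤ k → P.coeff (k + 1) ≤ P.coeff k)

/-- The q-Fibonacci factorial `[F_n]!_q = ∏_{k=1}^n [F_k]_q`. -/
noncomputable def qFibFactorial (n : ℕ) : Polynomial ℤ :=
  ∏ k ∈ Finset.range n, qAnalog (Nat.fib (k + 1))

lemma qAnalog_coeff (n k : ℕ) : (qAnalog n).coeff k = if k < n then 1 else 0 := by
  simp only [qAnalog, finset_sum_coeff, coeff_X_pow]
  rw [Finset.sum_ite_eq (Finset.range n) k (fun _ => (1 : ℤ))]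
  simp [Finset.mem_range]

lemma qAnalog_natDegree (n : ℕ) (h : 1 ≤ n) : (qAnalog n).natDegree = n - 1 := by
  apply le_antisymm
  · apply Polynomial.natDegree_sum_le_of_forall_le
    intro i hi
    simp only [Finset.mem_range] at hi
    calc (X ^ i : Polynomial ℤ).natDegree ≤ i := by simp
      _ ≤ n - 1 := by omega
  · apply Polynomial.le_natDegree_of_ne_zero
    rw [qAnalog_coeff]
    simp only [if_pos (by omega : n - 1 < n)]
    norm_num

lemma qAnalog_monic (n : ℕ) (h : 1 ≤ n) : (qAnalog n).Monic := by
  unfold Polynomial.Monic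
  rw [Polynomial.leadingCoeff, qAnalog_natDegree n h, qAnalog_coeff,
    if_pos (by omega : n - 1 < n)]

lemma qFibFactorial_monic (n : ℕ) : (qFibFactorial n).Monic := by
  apply Polynomial.monic_prod_of_monic
  intro k _
  exact qAnalog_monic _ (Nat.fib_pos.2 (by omega))

lemma qAnalog_reverse (n : ℕ) (h : 1 ≤ n) : (qAnalog n).reverse = qAnalog n := by
  ext k
  rw [Polynomial.coeff_reverse, qAnalog_natDegree n h]
  by_cases hk : k ≤ n - 1
  · rw [Polynomial.revAt_le hk, qAnalog_coeff, qAnalog_coeff]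
    have h1 : k < n := by omega
    have h2 : n - 1 - k < n := by omega
    simp [h1, h2]
  · rw [Polynomial.revAt_eq_self_of_lt (by omega)]

theorem qFiboCatalan_nonneg (m n : ℕ) (hm : 1 ≤ m) (hn : 1 ≤ n)
    (P C : Polynomial ℤ)
    (hP : P * (qFibFactorial m * qFibFactorial n) = qFibFactorial (m + n))
    (hC : C * qAnalog (Nat.fib (m + n)) = P)
    (hsymm : IsSymmPoly P) (huni : IsUnimodalPoly P) :
    ∀ i : ℕ, 0 ≤ C.coeff i := by
  set N := Nat.fib (m + n) with hNdef
  have hN : 1 ≤ N := Nat.fib_pos.2 (by omega)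
  have hA : (qAnalog N).Monic := qAnalog_monic N hN
  have hAd : (qAnalog N).natDegree = N - 1 := qAnalog_natDegree N hN
  have hPmonic : P.Monic := by
    apply Polynomial.Monic.of_mul_monic_right
      ((qFibFactorial_monic m).mul (qFibFactorial_monic n))
    rw [hP]; exact qFibFactorial_monic (m + n)
  have hCmonic : C.Monic := by
    apply Polynomial.Monic.of_mul_monic_right hA
    rw [hC]; exact hPmonic
  have hC0 : C ≠ 0 := hCmonic.ne_zero
  set d := P.natDegree with hddef
  set dC := C.natDegree with hdCdef
  have hd : d = dC + (N - 1) := by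
    rw [hddef, ← hC, Polynomial.natDegree_mul hC0 hA.ne_zero, hAd]
  have hPd : P.coeff d = 1 := hPmonic
  have hP0 : P.coeff 0 = 1 := by
    rw [hsymm 0 (Nat.zero_le _)]; simpa using hPmonic.leadingCoeff
  -- Claim A: coefficients increase strictly below the middle
  have hstep : ∀ k, 2 * k < d → P.coeff k ≤ P.coeff (k + 1) := by
    obtain ⟨M, hup, hdown⟩ := huni
    intro k hk
    by_cases hkM : k < M
    · exact hup k hkM
    · push_neg at hkM
      have h1 : M ≤ d - k - 1 := by omega
      have h2 := hdown (d - k - 1) h1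
      have e : d - k - 1 + 1 = d - k := by omega
      rw [e] at h2
      have e1 : P.coeff k = P.coeff (d - k) := hsymm k (by omega)
      have e2 : P.coeff (k + 1) = P.coeff (d - (k + 1)) := hsymm (k + 1) (by omega)
      have e3 : d - (k + 1) = d - k - 1 := by omega
      rw [e1, e2, e3]
      exact h2
  -- the key recurrence
  have hE : C * (X ^ N - 1) = P * (X - 1) := by
    have h1 : (qAnalog N) * (X - 1) = X ^ N - 1 := geom_sum_mul X N
    calc C * (X ^ N - 1) = C * ((qAnalog N) * (X - 1)) := by rw [h1]
      _ = (C * qAnalog N) * (X - 1) := by ring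
      _ = P * (X - 1) := by rw [hC]
  have hrec : ∀ k, C.coeff k =
      P.coeff k - (if 1 ≤ k then P.coeff (k - 1) else 0)
        + (if N ≤ k then C.coeff (k - N) else 0) := by
    intro k
    have h2 : (C * (X ^ N - 1)).coeff k = (P * (X - 1)).coeff k := by rw [hE]
    have h3 : P * (X - 1) = P * X ^ 1 - P := by ring
    rw [mul_sub, mul_one, h3] at h2
    rw [Polynomial.coeff_sub, Polynomial.coeff_sub, Polynomial.coeff_mul_X_pow',
      Polynomial.coeff_mul_X_pow'] at h2
    split_ifs at h2 ⊢ with h4 h5 h5 <;> omega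
  -- nonnegativity in the lower half
  have L1 : ∀ k, 2 * k ≤ d + 1 → 0 ≤ C.coeff k := by
    intro k
    induction k using Nat.strong_induction_on with
    | _ k ih =>
      intro hk
      rw [hrec k]
      have hb : 0 ≤ P.coeff k - (if 1 ≤ k then P.coeff (k - 1) else 0) := by
        by_cases hk1 : 1 ≤ k
        · rw [if_pos hk1]
          have h1 := hstep (k - 1) (by omega)
          have e : k - 1 + 1 = k := by omega
          rw [e] at h1
          linarith
        · rw [if_neg hk1]
          have : k = 0 := by omega
          rw [this, hP0]; norm_num
      have hc : 0 ≤ (if N ≤ k then C.coeff (k - N) else 0) := by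
        split_ifs with h
        · exact ih (k - N) (by omega) (by omega)
        · exact le_refl 0
      exact add_nonneg hb hc
  -- symmetry of C
  have hPrev : P.reverse = P := by
    ext k
    rw [Polynomial.coeff_reverse]
    by_cases hk : k ≤ d
    · rw [Polynomial.revAt_le hk]
      exact (hsymm k hk).symm
    · rw [Polynomial.revAt_eq_self_of_lt (by omega)]
  have hCrev : C.reverse = C := by
    have hr : (C * qAnalog N).reverse = C.reverse * (qAnalog N).reverse :=
      Polynomial.reverse_mul (by
        rw [hCmonic.leadingCoeff, hA.leadingCoeff]; norm_num)
    rw [hC, hPrev, qAnalog_reverse N hN, ← hC] at hr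
    exact mul_right_cancel₀ hA.ne_zero hr.symm
  have hCsym : ∀ k ≤ dC, C.coeff k = C.coeff (dC - k) := by
    intro k hk
    conv_lhs => rw [← hCrev]
    rw [Polynomial.coeff_reverse, Polynomial.revAt_le hk]
  -- conclusion
  intro i
  by_cases h1 : 2 * i ≤ d + 1
  · exact L1 i h1
  · by_cases h2 : i ≤ dC
    · rw [hCsym i h2]
      exact L1 (dC - i) (by omega)
    · rw [Polynomial.coeff_eq_zero_of_natDegree_lt (by omega)]
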